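/- arXiv:2002.04558 — 3 statements merged into one kernel-verified Lean document; each statement's English description precedes it below -/
import Mathlib

section
/- Let Γ ⊆ [N+1] be a finite set of parties, and define the entropy function S_Γ(K) = min(|K ∩ Γ|, |Γ| - |K ∩ Γ|) and the multipartite information I_I = ∑_{∅ ≠ K ⊆ I} (-1)^{1+|K|} S_Γ(K). If I ⊄ Γ (i.e., I contains an element not in Γ), then I_I = 0. -/
/-- The multipartite information of a perfect tensor on parties Γ vanishes whenever
the index set I is not contained in Γ. Here S_Γ(K) = min(|K ∩ Γ|, |Γ| - |K ∩ Γ|). -/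
theorem stmt4 {α : Type*} [DecidableEq α] (Γ I : Finset α) (h : ¬ I ⊆ Γ) :
    ∑ K ∈ I.powerset.filter (fun K => K.Nonempty),
      (-1 : ℝ) ^ (1 + K.card) *
        ((min ((K ∩ Γ).card) (Γ.card - (K ∩ Γ).card) : ℕ) : ℝ) = 0 := by
  obtain ⟨x, hxI, hxΓ⟩ := Finset.not_subset.mp h
  rw [Finset.sum_filter]
  have hins : ∀ K : Finset α, (insert x K) ∩ Γ = K ∩ Γ := fun K =>
    Finset.insert_inter_of_notMem hxΓ
  have hers : ∀ K : Finset α, (K.erase x) ∩ Γ = K ∩ Γ := by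
    intro K
    rw [Finset.erase_inter, Finset.erase_eq_of_notMem]
    simp [hxΓ]
  apply Finset.sum_involution (fun K _ => if x ∈ K then K.erase x else insert x K)
  · intro K hK
    by_cases hx : x ∈ K
    · simp only [hx, if_true]
      rw [if_pos ⟨x, hx⟩]
      by_cases hne : (K.erase x).Nonempty
      · rw [if_pos hne, hers K]
        have hcard : K.card = (K.erase x).card + 1 := by
          rw [Finset.card_erase_of_mem hx]
          have := Finset.card_pos.mpr ⟨x, hx⟩
          omega
        rw [hcard, show 1 + ((K.erase x).card + 1) = (1 + (K.erase x).card) + 1 from by omega,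
          pow_succ]
        ring
      · rw [if_neg hne]
        have hKx : K = {x} := by
          rw [Finset.not_nonempty_iff_eq_empty] at hne
          have h2 := Finset.insert_erase hx
          rw [hne] at h2
          simpa using h2.symm
        subst hKx
        have hint : ({x} : Finset α) ∩ Γ = ∅ := Finset.singleton_inter_of_notMem hxΓ
        simp [hint]
    · simp only [hx, if_false]
      rw [hins K, Finset.card_insert_of_notMem hx]
      rw [if_pos (Finset.insert_nonempty x K)]
      by_cases hne : K.Nonempty
      · rw [if_pos hne, show 1 + (K.card + 1) = (1 + K.card) + 1 from by omega, pow_succ]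
        ring
      · rw [if_neg hne]
        rw [Finset.not_nonempty_iff_eq_empty] at hne
        subst hne
        simp
  · intro K hK _
    by_cases hx : x ∈ K
    · simp only [hx, if_true]
      intro h2
      exact Finset.notMem_erase x K (by rw [h2]; exact hx)
    · simp only [hx, if_false]
      intro h2
      exact hx (h2 ▸ Finset.mem_insert_self x K)
  · intro K hK
    by_cases hx : x ∈ K
    · simp only [hx, if_true, Finset.notMem_erase x K, if_false,
        Finset.insert_erase hx]
    · simp only [hx, if_false, Finset.mem_insert_self x K, if_true,
        Finset.erase_insert hx]
  · intro K hK
    simp only [Finset.mem_powerset] at hK ⊢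
    by_cases hx : x ∈ K
    · simp only [hx, if_true]
      exact (Finset.erase_subset x K).trans hK
    · simp only [hx, if_false]
      exact Finset.insert_subset hxI hK
end

section
/- Let Γ be a finite set and define S_Γ(X) = min(|X ∩ Γ|, |Γ| - |X ∩ Γ|). Then for any three pairwise disjoint finite sets A, B, C: S_Γ(A∪B) + S_Γ(A∪C) + S_Γ(B∪C) ≥ S_Γ(A) + S_Γ(B) + S_Γ(C) + S_Γ(A∪B∪C). -/
open Finset

/-- Monogamy of mutual information for the perfect-tensor entropy function
S_Γ(X) = min(|X ∩ Γ|, |Γ| - |X ∩ Γ|) on pairwise disjoint sets A, B, C. -/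
theorem stmt8 {α : Type*} [DecidableEq α] (Γ A B C : Finset α)
    (hAB : Disjoint A B) (hAC : Disjoint A C) (hBC : Disjoint B C) :
    min (((A ∪ B) ∩ Γ).card) (Γ.card - ((A ∪ B) ∩ Γ).card)
      + min (((A ∪ C) ∩ Γ).card) (Γ.card - ((A ∪ C) ∩ Γ).card)
      + min (((B ∪ C) ∩ Γ).card) (Γ.card - ((B ∪ C) ∩ Γ).card)
      ≥ min ((A ∩ Γ).card) (Γ.card - (A ∩ Γ).card)
        + min ((B ∩ Γ).card) (Γ.card - (B ∩ Γ).card)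
        + min ((C ∩ Γ).card) (Γ.card - (C ∩ Γ).card)
        + min (((A ∪ B ∪ C) ∩ Γ).card) (Γ.card - ((A ∪ B ∪ C) ∩ Γ).card) := by
  have hAB' : Disjoint (A ∩ Γ) (B ∩ Γ) := hAB.mono inter_subset_left inter_subset_left
  have hAC' : Disjoint (A ∩ Γ) (C ∩ Γ) := hAC.mono inter_subset_left inter_subset_left
  have hBC' : Disjoint (B ∩ Γ) (C ∩ Γ) := hBC.mono inter_subset_left inter_subset_left
  have hABC' : Disjoint (A ∩ Γ ∪ B ∩ Γ) (C ∩ Γ) := disjoint_union_left.2 ⟨hAC', hBC'⟩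
  rw [union_inter_distrib_right, union_inter_distrib_right, union_inter_distrib_right,
    union_inter_distrib_right, card_union_of_disjoint hAB', card_union_of_disjoint hAC',
    card_union_of_disjoint hBC', union_inter_distrib_right, card_union_of_disjoint hABC', card_union_of_disjoint hAB']
  have hle : (A ∩ Γ ∪ B ∩ Γ ∪ C ∩ Γ).card ≤ Γ.card :=
    card_le_card (union_subset (union_subset inter_subset_right inter_subset_right)
      inter_subset_right)
  rw [card_union_of_disjoint hABC', card_union_of_disjoint hAB'] at hle
  omega
end

section
/- Let N ≥ 2 and suppose Q is an information quantity whose K-basis expansion is Q = ∑_Γ λ_Γ K_Γ with λ_Γ = 0 for every Γ of the form Γ = {i, j} (two-element subsets of [N+1]). Define the induced I-basis coefficients ν_I by evaluating Q on the perfect-tensor entropy vectors: ν_i = λ_{i,N+1} and ν_i + ν_j + 2ν_{ij} = λ_{ij} for all i, j ∈ [N]. Then ν_I = 0 for all I with |I| ≤ 2, i.e., Q is superbalanced. -/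
/-- If all rank-2 K-basis coefficients of an information quantity vanish, then all
I-basis coefficients of rank ≤ 2 vanish, i.e. the quantity is superbalanced. Here
[N] = Icc 1 N, the purifier is party N+1, and the induced I-basis coefficients ν satisfy
ν_i = λ_{i,N+1} and ν_i + ν_j + 2ν_{ij} = λ_{ij}. -/
theorem stmt16 (N : ℕ) (hN : 2 ≤ N) (lam ν : Finset ℕ → ℝ)
    (hlam : ∀ Γ ⊆ Finset.Icc 1 (N + 1), Γ.card = 2 → lam Γ = 0)
    (h1 : ∀ i ∈ Finset.Icc 1 N, ν {i} = lam {i, N + 1})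
    (h2 : ∀ i ∈ Finset.Icc 1 N, ∀ j ∈ Finset.Icc 1 N, i ≠ j →
      ν {i} + ν {j} + 2 * ν {i, j} = lam {i, j}) :
    ∀ I ⊆ Finset.Icc 1 N, I.Nonempty → I.card ≤ 2 → ν I = 0 := by
  have hsing : ∀ i ∈ Finset.Icc 1 N, ν {i} = 0 := by
    intro i hi
    rw [h1 i hi]
    apply hlam
    · intro x hx
      simp only [Finset.mem_insert, Finset.mem_singleton] at hx
      simp only [Finset.mem_Icc] at hi ⊢
      rcases hx with rfl | rfl
      · omega
      · omega
    · rw [Finset.card_insert_of_notMem, Finset.card_singleton]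
      simp only [Finset.mem_singleton]
      simp only [Finset.mem_Icc] at hi
      omega
  intro I hI hne hcard
  have hpos := Finset.card_pos.mpr hne
  have h12 : I.card = 1 ∨ I.card = 2 := by omega
  rcases h12 with h | h
  · rcases Finset.card_eq_one.mp h with ⟨i, rfl⟩
    exact hsing i (hI (Finset.mem_singleton_self i))
  · rcases Finset.card_eq_two.mp h with ⟨i, j, hij, rfl⟩
    have hi : i ∈ Finset.Icc 1 N := hI (by simp)
    have hj : j ∈ Finset.Icc 1 N := hI (by simp)
    have key := h2 i hi j hj hij
    have hl : lam {i, j} = 0 := by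
      apply hlam
      · intro x hx
        simp only [Finset.mem_insert, Finset.mem_singleton] at hx
        simp only [Finset.mem_Icc] at hi hj ⊢
        rcases hx with rfl | rfl <;> omega
      · exact Finset.card_eq_two.mpr ⟨i, j, hij, rfl⟩
    rw [hsing i hi, hsing j hj, hl] at key
    linarith
end
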